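/- Let m, n ≥ 1 be integers. Given R ≥ 1 there exist constants c₂ > 0 and C₂ ≥ 1 depending only on R, m, n, such that the following holds for any real p with n < p < ∞. Suppose we are given ε₂ ∈ (0, c₂], a point x ∈ ℝⁿ, a symmetric convex subset σ ⊆ 𝒫, a subset 𝒜 ⊆ ℳ, and a family (P_α)_{α∈𝒜} ⊂ 𝒫 such that P_α ∈ ε₂·σ for all α ∈ 𝒜; |∂^β P_α(x) − δ_{αβ}| ≤ ε₂ for all α ∈ 𝒜 and β ∈ ℳ with β ≥ α; and |∂^β P_α(x)| ≤ R for all α ∈ 𝒜, β ∈ ℳ. Then there exists a (C₂, C₂·ε₂) near-triangular matrix B = (B_{αβ})_{α,β∈𝒜} such that the polynomials P̂_α := Σ_{β∈𝒜} B_{αβ} P_β (α ∈ 𝒜) form an (𝒜, x, C₂·ε₂, 1)-basis for σ, and moreover |∂^β P̂_α(x)| ≤ C₂ for every α ∈ 𝒜 and β ∈ ℳ. -/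

import Mathlib

noncomputable section

/-- First-order partial derivative in coordinate direction `i`. -/
def pd {n : ℕ} (i : Fin n) (F : (Fin n → ℝ) → ℝ) : (Fin n → ℝ) → ℝ :=
  fun x => fderiv ℝ F x (Pi.single i 1)

/-- Iterated partial derivative in direction `i`. -/
def pdIter {n : ℕ} (i : Fin n) : ℕ → ((Fin n → ℝ) → ℝ) → ((Fin n → ℝ) → ℝ)
  | 0 => id
  | k + 1 => fun F => pd i (pdIter i k F)

/-- Multi-index partial derivative `∂^α`. -/
def pdM {n : ℕ} (α : Fin n → ℕ) (F : (Fin n → ℝ) → ℝ) : (Fin n → ℝ) → ℝ :=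
  (Finset.univ : Finset (Fin n)).toList.foldr (fun i G => pdIter i (α i) G) F

/-- The order `|α|` of a multi-index. -/
def deg {n : ℕ} (α : Fin n → ℕ) : ℕ := ∑ i, α i

/-- The finite set of multi-indices of order at most `d`. -/
def Midx (n d : ℕ) : Finset (Fin n → ℕ) :=
  (Fintype.piFinset fun _ : Fin n => Finset.range (d + 1)).filter fun α => deg α ≤ d

/-- Partial sum `∑_{i=1}^{k} α_i` of the first `k` entries of a multi-index. -/
def psum {n : ℕ} (α : Fin n → ℕ) (k : ℕ) : ℕ :=
  ∑ i ∈ Finset.univ.filter (fun i : Fin n => (i : ℕ) < k), α i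

/-- The order `α < β` on multi-indices. -/
def mlt {n : ℕ} (α β : Fin n → ℕ) : Prop :=
  ∃ k ≤ n, psum α k ≠ psum β k ∧ (∀ j ≤ n, k < j → psum α j = psum β j) ∧
    psum α k < psum β k

/-- `P` is (the function given by) a real polynomial of degree at most `m - 1`. -/
def IsPolyDeg {n : ℕ} (m : ℕ) (P : (Fin n → ℝ) → ℝ) : Prop :=
  ∃ coef : (Fin n → ℕ) → ℝ, ∀ x, P x = ∑ α ∈ Midx n (m - 1), coef α * ∏ i, x i ^ α i

/-- `(P_α)_{α ∈ A}` is an `(𝒜, x, ε, δ)`-basis for `σ`. -/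
def IsBasis {n : ℕ} (m : ℕ) (p : ℝ) (A : Finset (Fin n → ℕ)) (x : Fin n → ℝ)
    (ε δ : ℝ) (σ : Set ((Fin n → ℝ) → ℝ)) (P : (Fin n → ℕ) → (Fin n → ℝ) → ℝ) : Prop :=
  (∀ α ∈ A, ∃ Q ∈ σ, P α = (ε * δ ^ ((n : ℝ) / p + (deg α : ℝ) - (m : ℝ))) • Q) ∧
  (∀ α ∈ A, ∀ β ∈ A, pdM β (P α) x = if β = α then 1 else 0) ∧
  (∀ α ∈ A, ∀ β ∈ Midx n (m - 1), mlt α β →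
    |pdM β (P α) x| ≤ ε * δ ^ ((deg α : ℝ) - (deg β : ℝ)))



lemma psum_zero {n : ℕ} (α : Fin n → ℕ) : psum α 0 = 0 := by
  simp [psum]

lemma psum_succ {n : ℕ} (α : Fin n → ℕ) (k : ℕ) (hk : k < n) :
    psum α (k + 1) = psum α k + α ⟨k, hk⟩ := by
  unfold psum
  rw [show Finset.univ.filter (fun i : Fin n => (i : ℕ) < k + 1)
      = insert ⟨k, hk⟩ (Finset.univ.filter (fun i : Fin n => (i : ℕ) < k)) by
    ext i; simp [Fin.ext_iff]; omega]
  rw [Finset.sum_insert (by simp)]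
  ring

lemma psum_le_deg {n : ℕ} (α : Fin n → ℕ) (k : ℕ) : psum α k ≤ deg α :=
  Finset.sum_le_sum_of_subset (Finset.filter_subset _ _)

lemma eq_of_psum_eq {n : ℕ} {α β : Fin n → ℕ} (h : ∀ j ≤ n, psum α j = psum β j) : α = β := by
  funext i
  have h1 := psum_succ α i i.isLt
  have h2 := psum_succ β i i.isLt
  have e1 : psum α i = psum β i := h i (le_of_lt i.isLt)
  have e2 : psum α (i + 1) = psum β (i + 1) := h (i + 1) i.isLt
  simp only [Fin.eta] at h1 h2
  omega

lemma mlt_ne {n : ℕ} {α β : Fin n → ℕ} (h : mlt α β) : α ≠ β := by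
  rintro rfl
  obtain ⟨k, -, -, -, hlt⟩ := h
  omega

lemma mlt_trichotomy {n : ℕ} {α β : Fin n → ℕ} (h : α ≠ β) : mlt α β ∨ mlt β α := by
  have hne : ∃ j ≤ n, psum α j ≠ psum β j := by
    by_contra hc
    push_neg at hc
    exact h (eq_of_psum_eq hc)
  classical
  set s := (Finset.range (n+1)).filter (fun j => psum α j ≠ psum β j) with hs
  have hsne : s.Nonempty := by
    obtain ⟨j, hj, hne⟩ := hne
    exact ⟨j, by simp [hs, Nat.lt_succ_of_le hj, hne]⟩
  obtain ⟨k, hk, hkmax⟩ := Finset.exists_max_image s id hsne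
  simp only [hs, Finset.mem_filter, Finset.mem_range] at hk
  have hmax : ∀ j ≤ n, k < j → psum α j = psum β j := by
    intro j hj hkj
    by_contra hne'
    have := hkmax j (by simp [hs, Nat.lt_succ_of_le hj, hne'])
    simp at this; omega
  rcases Nat.lt_or_ge (psum α k) (psum β k) with hlt | hge
  · exact Or.inl ⟨k, by omega, hk.2, hmax, hlt⟩
  · exact Or.inr ⟨k, by omega, (Ne.symm hk.2), fun j hj hkj => (hmax j hj hkj).symm,
      lt_of_le_of_ne hge (Ne.symm hk.2)⟩

/-- base-`m` key encoding the psum vector -/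
def key {n : ℕ} (m : ℕ) (α : Fin n → ℕ) : ℕ :=
  ∑ j ∈ Finset.range n, psum α (j + 1) * m ^ j

lemma geom_aux (m t : ℕ) (hm : 1 ≤ m) : (∑ j ∈ Finset.range t, (m - 1) * m ^ j) + 1 = m ^ t := by
  obtain ⟨m', rfl⟩ : ∃ m', m = m' + 1 := ⟨m - 1, by omega⟩
  induction t with
  | zero => simp
  | succ t ih =>
    rw [Finset.sum_range_succ]
    have : (m' + 1 - 1) * (m' + 1) ^ t + (m' + 1) ^ t = (m' + 1) ^ (t + 1) := by
      simp only [Nat.add_sub_cancel, pow_succ]; ring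
    omega

lemma deg_le_of_midx {m n : ℕ} {α : Fin n → ℕ} (hα : α ∈ Midx n (m - 1)) : deg α ≤ m - 1 :=
  (Finset.mem_filter.mp hα).2

lemma key_lt_of_mlt {m n : ℕ} (hm : 1 ≤ m) {α β : Fin n → ℕ}
    (hα : α ∈ Midx n (m - 1)) (hβ : β ∈ Midx n (m - 1)) (h : mlt α β) :
    key m α < key m β := by
  obtain ⟨k, hkn, hne, hagree, hlt⟩ := h
  have hk1 : 1 ≤ k := by
    rcases Nat.eq_zero_or_pos k with rfl | h1
    · rw [psum_zero, psum_zero] at hne; omega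
    · exact h1
  obtain ⟨t, rfl⟩ : ∃ t, k = t + 1 := ⟨k - 1, by omega⟩
  have htn : t < n := by omega
  unfold key
  rw [← Finset.sum_range_add_sum_Ico (fun j => psum α (j + 1) * m ^ j) htn,
      ← Finset.sum_range_add_sum_Ico (fun j => psum β (j + 1) * m ^ j) htn,
      Finset.sum_range_succ, Finset.sum_range_succ]
  have hIco : ∑ j ∈ Finset.Ico (t+1) n, psum α (j + 1) * m ^ j
      = ∑ j ∈ Finset.Ico (t+1) n, psum β (j + 1) * m ^ j := by
    apply Finset.sum_congr rfl
    intro j hj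
    rw [Finset.mem_Ico] at hj
    rw [hagree (j + 1) (by omega) (by omega)]
  rw [hIco]
  have hSα : ∑ j ∈ Finset.range t, psum α (j + 1) * m ^ j + 1 ≤ m ^ t := by
    rw [← geom_aux m t hm]
    have : ∑ j ∈ Finset.range t, psum α (j + 1) * m ^ j
        ≤ ∑ j ∈ Finset.range t, (m - 1) * m ^ j := by
      apply Finset.sum_le_sum
      intro j hj
      exact Nat.mul_le_mul_right _ (le_trans (psum_le_deg α _) (deg_le_of_midx hα))
    omega
  have hstep : (psum α (t+1) + 1) * m ^ t ≤ psum β (t+1) * m ^ t :=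
    Nat.mul_le_mul_right _ (by omega)
  have : ∑ j ∈ Finset.range t, psum α (j + 1) * m ^ j + psum α (t+1) * m ^ t
      < psum β (t+1) * m ^ t := by
    have := hSα
    nlinarith [hstep]
  exact Nat.add_lt_add_right (lt_of_lt_of_le this (Nat.le_add_left _ _)) _

lemma key_lt_iff_mlt {m n : ℕ} (hm : 1 ≤ m) {α β : Fin n → ℕ}
    (hα : α ∈ Midx n (m - 1)) (hβ : β ∈ Midx n (m - 1)) :
    mlt α β ↔ key m α < key m β := by
  constructor
  · exact key_lt_of_mlt hm hα hβ
  · intro h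
    have hne : α ≠ β := by rintro rfl; omega
    rcases mlt_trichotomy hne with h' | h'
    · exact h'
    · exact absurd (key_lt_of_mlt hm hβ hα h') (by omega)


abbrev Sm {n : ℕ} (F : (Fin n → ℝ) → ℝ) : Prop := ContDiff ℝ (⊤:ℕ∞) F

def LinOp {n : ℕ} (T : ((Fin n → ℝ) → ℝ) → ((Fin n → ℝ) → ℝ)) : Prop :=
  (∀ F, Sm F → Sm (T F)) ∧
  (∀ F G, Sm F → Sm G → T (fun y => F y + G y) = fun y => T F y + T G y) ∧
  (∀ (c : ℝ) F, Sm F → T (fun y => c * F y) = fun y => c * T F y)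

lemma linOp_pd {n : ℕ} (i : Fin n) : LinOp (pd i) := by
  refine ⟨?_, ?_, ?_⟩
  · intro F hF
    exact (hF.fderiv_right (le_refl _)).clm_apply contDiff_const
  · intro F G hF hG
    funext y
    unfold pd
    rw [fderiv_fun_add ((hF.differentiable (by simp)) y)
      ((hG.differentiable (by simp)) y)]
    simp
  · intro c F hF
    funext y
    unfold pd
    rw [fderiv_const_mul ((hF.differentiable (by simp)) y) c]
    simp

lemma linOp_comp {n : ℕ} {T S : ((Fin n → ℝ) → ℝ) → ((Fin n → ℝ) → ℝ)}
    (hT : LinOp T) (hS : LinOp S) : LinOp (fun F => T (S F)) := by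
  obtain ⟨hT1, hT2, hT3⟩ := hT
  obtain ⟨hS1, hS2, hS3⟩ := hS
  refine ⟨fun F hF => hT1 _ (hS1 _ hF), ?_, ?_⟩
  · intro F G hF hG
    show T (S fun y => F y + G y) = _
    rw [hS2 F G hF hG, hT2 (S F) (S G) (hS1 _ hF) (hS1 _ hG)]
  · intro c F hF
    show T (S fun y => c * F y) = _
    rw [hS3 c F hF, hT3 c (S F) (hS1 _ hF)]

lemma linOp_id {n : ℕ} : LinOp (id : ((Fin n → ℝ) → ℝ) → ((Fin n → ℝ) → ℝ)) :=
  ⟨fun _ h => h, fun _ _ _ _ => rfl, fun _ _ _ => rfl⟩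

lemma linOp_pdIter {n : ℕ} (i : Fin n) (k : ℕ) : LinOp (pdIter i k) := by
  induction k with
  | zero => exact linOp_id
  | succ k ih =>
    have := linOp_comp (linOp_pd i) ih
    simpa only [pdIter] using this

lemma linOp_pdM {n : ℕ} (α : Fin n → ℕ) : LinOp (pdM α) := by
  unfold pdM
  generalize (Finset.univ : Finset (Fin n)).toList = l
  induction l with
  | nil => exact linOp_id
  | cons i l ih =>
    simpa using linOp_comp (linOp_pdIter i (α i)) ih

lemma pdM_zero {n : ℕ} (α : Fin n → ℕ) : pdM α (fun _ => (0:ℝ)) = fun _ => 0 := by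
  obtain ⟨h1, h2, h3⟩ := linOp_pdM (n := n) α
  have := h3 0 (fun _ => 0) contDiff_const
  simpa using this

lemma pdM_finsum {n : ℕ} (α : Fin n → ℕ) {ι : Type*} (s : Finset ι)
    (c : ι → ℝ) (F : ι → (Fin n → ℝ) → ℝ) (hF : ∀ γ ∈ s, Sm (F γ)) :
    pdM α (fun y => ∑ γ ∈ s, c γ * F γ y) = fun x => ∑ γ ∈ s, c γ * pdM α (F γ) x := by
  classical
  obtain ⟨h1, h2, h3⟩ := linOp_pdM (n := n) α
  induction s using Finset.induction_on with
  | empty => simpa using pdM_zero α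
  | insert a s hnotmem ih =>
    have hFa : Sm (F a) := hF a (Finset.mem_insert_self a s)
    have hFs : ∀ γ ∈ s, Sm (F γ) := fun γ hγ => hF γ (Finset.mem_insert_of_mem hγ)
    have hsum : Sm (fun y => ∑ γ ∈ s, c γ * F γ y) :=
      ContDiff.sum fun γ hγ => contDiff_const.mul (hFs γ hγ)
    have heq : (fun y => ∑ γ ∈ insert a s, c γ * F γ y)
        = fun y => (fun z => c a * F a z) y + (fun z => ∑ γ ∈ s, c γ * F γ z) y := by
      funext y
      rw [Finset.sum_insert hnotmem]
    rw [heq, h2 _ _ (contDiff_const.mul hFa) hsum, h3 (c a) (F a) hFa, ih hFs]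
    funext x
    rw [Finset.sum_insert hnotmem]

lemma monomial_smooth {n : ℕ} (α : Fin n → ℕ) :
    Sm (fun x : Fin n → ℝ => ∏ i, x i ^ α i) := by
  classical
  have : ∀ s : Finset (Fin n), Sm (fun x : Fin n → ℝ => ∏ i ∈ s, x i ^ α i) := by
    intro s
    induction s using Finset.induction_on with
    | empty => simpa using contDiff_const
    | insert a s hnotmem ih =>
      have ha : Sm (fun x : Fin n → ℝ => x a ^ α a) :=
        ((ContinuousLinearMap.proj (R := ℝ) (φ := fun _ : Fin n => ℝ) a).contDiff (𝕜 := ℝ)).pow (α a)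
      have heq : (fun x : Fin n → ℝ => ∏ i ∈ insert a s, x i ^ α i)
          = fun x => (x a ^ α a) * ∏ i ∈ s, x i ^ α i := by
        funext x; rw [Finset.prod_insert hnotmem]
      rw [heq]
      exact ha.mul ih
  exact this Finset.univ

lemma isPolyDeg_smooth {m n : ℕ} {Q : (Fin n → ℝ) → ℝ} (h : IsPolyDeg m Q) : Sm Q := by
  obtain ⟨coef, hc⟩ := h
  have : Q = fun x => ∑ α ∈ Midx n (m - 1), coef α * ∏ i, x i ^ α i := funext hc
  rw [this]
  exact ContDiff.sum fun α _ => contDiff_const.mul (monomial_smooth α)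


section MatrixPart

variable {ι : Type*} [Fintype ι] [DecidableEq ι]
variable (f : ι → ℕ) (hf : Function.Injective f)
variable (e : Matrix ι ι ℝ) (ε R : ℝ)

lemma sign_smul_abs (σ : Equiv.Perm ι) (x : ℝ) : |Equiv.Perm.sign σ • x| = |x| := by
  rcases Int.units_eq_one_or (Equiv.Perm.sign σ) with h | h <;>
    simp [h, Units.smul_def]

lemma perm_eq_one_of_le (hf : Function.Injective f) (σ : Equiv.Perm ι)
    (h : ∀ r, f (σ r) ≤ f r) : σ = 1 := by
  have hsum : ∑ r, f (σ r) = ∑ r, f r := Equiv.sum_comp σ f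
  have := (Finset.sum_eq_sum_iff_of_le (fun r _ => h r)).mp hsum
  ext r
  exact hf (this r (Finset.mem_univ r))

section Bounds

variable (hε : 0 ≤ ε) (hε1 : ε ≤ 1) (hR : 1 ≤ R)
variable (hbd : ∀ i j, |e i j| ≤ R)

include hε hR hbd

lemma prod_term_bound (σ : Equiv.Perm ι) (r₀ : ι) (h0 : |e (σ r₀) r₀| ≤ ε) :
    |∏ r, e (σ r) r| ≤ ε * R ^ (Fintype.card ι - 1) := by
  rw [Finset.abs_prod]
  rw [← Finset.mul_prod_erase Finset.univ _ (Finset.mem_univ r₀)]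
  have h1 : ∏ r ∈ Finset.univ.erase r₀, |e (σ r) r| ≤ R ^ (Fintype.card ι - 1) := by
    have h2 : ∏ r ∈ Finset.univ.erase r₀, |e (σ r) r|
        ≤ ∏ _r ∈ Finset.univ.erase r₀, R :=
      Finset.prod_le_prod (fun r _ => abs_nonneg _) (fun r _ => hbd _ _)
    rwa [Finset.prod_const, Finset.card_erase_of_mem (Finset.mem_univ r₀),
      Finset.card_univ] at h2
  calc |e (σ r₀) r₀| * ∏ r ∈ Finset.univ.erase r₀, |e (σ r) r|
      ≤ ε * R ^ (Fintype.card ι - 1) := by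
        apply mul_le_mul h0 h1 (Finset.prod_nonneg fun r _ => abs_nonneg _) hε

lemma prod_all_bound (σ : Equiv.Perm ι) : |∏ r, e (σ r) r| ≤ R ^ (Fintype.card ι) := by
  rw [Finset.abs_prod]
  have h2 : ∏ r : ι, |e (σ r) r| ≤ ∏ _r : ι, R :=
    Finset.prod_le_prod (fun r _ => abs_nonneg _) (fun r _ => hbd _ _)
  rwa [Finset.prod_const, Finset.card_univ] at h2

variable (hdiag : ∀ i, |e i i - 1| ≤ ε)
variable (hlow : ∀ i j, f j < f i → |e i j| ≤ ε)

include hdiag hlow hε1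

lemma det_lower_bound (hf : Function.Injective f) :
    1 - ε * (Fintype.card ι) - ε * (Fintype.card ι).factorial * R ^ (Fintype.card ι - 1)
      ≤ e.det := by
  classical
  set NN := Fintype.card ι
  rw [Matrix.det_apply]
  rw [← Finset.sum_erase_add _ _ (Finset.mem_univ (1 : Equiv.Perm ι))]
  have hid : ((1 : Equiv.Perm ι).sign • ∏ i, e ((1 : Equiv.Perm ι) i) i : ℝ) = ∏ i, e i i := by
    simp
  have hdiagLB : (1 : ℝ) - ε * NN ≤ ∏ i, e i i := by
    have h1 : ∀ i : ι, (1 - ε : ℝ) ≤ e i i := by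
      intro i
      have := hdiag i
      cases abs_le.mp this; linarith
    have h2 : ((1 : ℝ) - ε) ^ NN ≤ ∏ i, e i i := by
      have h2a : ∀ i ∈ (Finset.univ : Finset ι), (0:ℝ) ≤ 1 - ε := fun i _ => by linarith
      have := Finset.prod_le_prod (f := fun _ : ι => (1 - ε : ℝ)) (g := fun i => e i i)
        h2a (fun i _ => h1 i)
      simpa [Finset.prod_const, Finset.card_univ] using this
    have h3 : (1 : ℝ) - ε * NN ≤ (1 - ε) ^ NN := by
      have := one_add_mul_le_pow (a := -ε) (by linarith) NN
      calc (1:ℝ) - ε * NN = 1 + NN * (-ε) := by ring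
        _ ≤ (1 + -ε) ^ NN := this
        _ = (1 - ε) ^ NN := by ring_nf
    linarith
  have herr : |∑ σ ∈ Finset.univ.erase (1 : Equiv.Perm ι),
      (Equiv.Perm.sign σ • ∏ i, e (σ i) i : ℝ)|
      ≤ ε * NN.factorial * R ^ (NN - 1) := by
    calc |∑ σ ∈ Finset.univ.erase (1 : Equiv.Perm ι), (Equiv.Perm.sign σ • ∏ i, e (σ i) i : ℝ)|
        ≤ ∑ σ ∈ Finset.univ.erase (1 : Equiv.Perm ι), |(Equiv.Perm.sign σ • ∏ i, e (σ i) i : ℝ)| :=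
          Finset.abs_sum_le_sum_abs _ _
      _ ≤ (Finset.univ.erase (1 : Equiv.Perm ι)).card • (ε * R ^ (NN - 1)) := by
          apply Finset.sum_le_card_nsmul
          intro σ hσ
          rw [Finset.mem_erase] at hσ
          obtain ⟨r₀, hr₀⟩ : ∃ r, f r < f (σ r) := by
            by_contra hc
            push_neg at hc
            exact hσ.1 (perm_eq_one_of_le f hf σ hc)
          rw [sign_smul_abs]
          exact prod_term_bound e ε R hε hR hbd σ r₀ (hlow _ _ hr₀)
      _ ≤ NN.factorial * (ε * R ^ (NN - 1)) := by
          rw [nsmul_eq_mul]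
          apply mul_le_mul_of_nonneg_right _ (by positivity)
          have hle : (Finset.univ.erase (1 : Equiv.Perm ι)).card ≤ NN.factorial := by
            calc (Finset.univ.erase (1 : Equiv.Perm ι)).card
                ≤ (Finset.univ : Finset (Equiv.Perm ι)).card := Finset.card_le_card
                  (Finset.erase_subset _ _)
              _ = NN.factorial := by rw [Finset.card_univ, Fintype.card_perm]
          exact_mod_cast hle
      _ = ε * NN.factorial * R ^ (NN - 1) := by ring
  have := abs_le.mp herr
  linarith [this.1]

omit hdiag hlow hε1 in
lemma updateRow_bd (i j : ι) :
    ∀ a b, |(e.updateRow j (Pi.single i 1)) a b| ≤ R := by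
  intro a b
  rw [Matrix.updateRow_apply]
  split
  · rw [Pi.single_apply]
    split <;> simp <;> linarith
  · exact hbd a b

omit hdiag hlow hε1 in
lemma adj_bound (i j : ι) :
    |e.adjugate i j| ≤ (Fintype.card ι).factorial * R ^ (Fintype.card ι) := by
  classical
  rw [Matrix.adjugate_apply, Matrix.det_apply]
  have hDbd : ∀ a b, |(e.updateRow j (Pi.single i 1)) a b| ≤ R :=
    updateRow_bd e ε R hε hR hbd i j
  calc |∑ σ : Equiv.Perm ι, (Equiv.Perm.sign σ • ∏ r, (e.updateRow j (Pi.single i 1)) (σ r) r : ℝ)|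
      ≤ ∑ σ : Equiv.Perm ι, |(Equiv.Perm.sign σ • ∏ r, (e.updateRow j (Pi.single i 1)) (σ r) r : ℝ)| :=
        Finset.abs_sum_le_sum_abs _ _
    _ ≤ (Finset.univ : Finset (Equiv.Perm ι)).card • (R ^ (Fintype.card ι)) := by
        apply Finset.sum_le_card_nsmul
        intro σ _
        rw [sign_smul_abs]
        exact prod_all_bound (e.updateRow j (Pi.single i 1)) ε R hε hR hDbd σ
    _ = (Fintype.card ι).factorial * R ^ (Fintype.card ι) := by
        rw [Finset.card_univ, Fintype.card_perm, nsmul_eq_mul]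

lemma adj_small (hf : Function.Injective f) (i j : ι) (hji : f j < f i) :
    |e.adjugate i j| ≤ (Fintype.card ι).factorial * (ε * R ^ (Fintype.card ι - 1)) := by
  classical
  rw [Matrix.adjugate_apply, Matrix.det_apply]
  have hDbd : ∀ a b, |(e.updateRow j (Pi.single i 1)) a b| ≤ R :=
    updateRow_bd e ε R hε hR hbd i j
  calc |∑ σ : Equiv.Perm ι, (Equiv.Perm.sign σ • ∏ r, (e.updateRow j (Pi.single i 1)) (σ r) r : ℝ)|
      ≤ ∑ σ : Equiv.Perm ι, |(Equiv.Perm.sign σ • ∏ r, (e.updateRow j (Pi.single i 1)) (σ r) r : ℝ)| :=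
        Finset.abs_sum_le_sum_abs _ _
    _ ≤ (Finset.univ : Finset (Equiv.Perm ι)).card • (ε * R ^ (Fintype.card ι - 1)) := by
        apply Finset.sum_le_card_nsmul
        intro σ _
        rw [sign_smul_abs]
        by_cases hσi : σ i = j
        · have hji' : j ≠ i := fun h => by rw [h] at hji; exact lt_irrefl _ hji
          have hσ1 : σ ≠ 1 := by
            intro h; rw [h] at hσi; exact hji' (by simpa using hσi.symm)
          obtain ⟨r₀, hr₀⟩ : ∃ r, f r < f (σ r) := by
            by_contra hc
            push_neg at hc
            exact hσ1 (perm_eq_one_of_le f hf σ hc)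
          have hr₀i : r₀ ≠ i := by
            intro h; rw [h, hσi] at hr₀; exact absurd hr₀ (by omega)
          have hfact : (e.updateRow j (Pi.single i 1)) (σ r₀) r₀ = e (σ r₀) r₀ := by
            rw [Matrix.updateRow_apply, if_neg]
            intro h
            exact hr₀i (σ.injective (h.trans hσi.symm))
          apply prod_term_bound (e.updateRow j (Pi.single i 1)) ε R hε hR hDbd σ r₀
          rw [hfact]
          exact hlow _ _ hr₀
        · have hz : ∏ r, (e.updateRow j (Pi.single i 1)) (σ r) r = 0 := by
            apply Finset.prod_eq_zero (Finset.mem_univ (σ.symm j))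
            rw [σ.apply_symm_apply, Matrix.updateRow_self, Pi.single_apply, if_neg]
            intro h
            apply hσi
            rw [← h, σ.apply_symm_apply]
          rw [hz, abs_zero]
          positivity
    _ = (Fintype.card ι).factorial * (ε * R ^ (Fintype.card ι - 1)) := by
        rw [Finset.card_univ, Fintype.card_perm, nsmul_eq_mul]

end Bounds
end MatrixPart


set_option linter.unusedSectionVars false

lemma convex_comb_mem {V : Type*} [AddCommGroup V] [Module ℝ V] {σ : Set V}
    (hc : Convex ℝ σ) (hsym : ∀ v ∈ σ, -v ∈ σ) (h0 : (0:V) ∈ σ)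
    {ι : Type*} [DecidableEq ι] (t : Finset ι) (c : ι → ℝ) (q : ι → V)
    (hq : ∀ i ∈ t, q i ∈ σ) (hsum : ∑ i ∈ t, |c i| ≤ 1) :
    (∑ i ∈ t, c i • q i) ∈ σ := by
  classical
  set w : Option ι → ℝ := fun o => o.elim (1 - ∑ i ∈ t, |c i|) (fun i => if i ∈ t then |c i| else 0) with hw
  set z : Option ι → V := fun o => o.elim 0 (fun i => if 0 ≤ c i then q i else - q i) with hz
  have habs : ∀ i ∈ t, |c i| ≥ 0 := fun i _ => abs_nonneg _
  have hmem : ∑ o ∈ insert none (t.image some), w o • z o ∈ σ := by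
    apply hc.sum_mem
    · intro o ho
      rcases o with _ | i
      · simp only [hw, Option.elim]; linarith
      · simp only [hw, Option.elim]; positivity
    · rw [Finset.sum_insert (by simp), Finset.sum_image (by simp)]
      simp only [hw, Option.elim]
      rw [Finset.sum_congr rfl (fun i hi => if_pos hi)]
      ring
    · intro o ho
      rcases o with _ | i
      · exact h0
      · simp only [hz, Option.elim]
        rw [Finset.mem_insert] at ho
        rcases ho with h | h
        · exact absurd h (by simp)
        · obtain ⟨j, hj, hji⟩ := Finset.mem_image.mp h
          cases Option.some.inj hji
          split
          · exact hq _ hj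
          · exact hsym _ (hq _ hj)
  rw [Finset.sum_insert (by simp), Finset.sum_image (by simp)] at hmem
  have h1 : (w none • z none : V) = 0 := by simp [hw, hz]
  have h2 : ∀ i ∈ t, w (some i) • z (some i) = c i • q i := by
    intro i hi
    simp only [hw, hz, Option.elim, if_pos hi]
    rcases le_or_gt 0 (c i) with h | h
    · rw [if_pos h, abs_of_nonneg h]
    · rw [if_neg (not_le.mpr h), abs_of_neg h, smul_neg, neg_smul, neg_neg]
  rw [h1, zero_add, Finset.sum_congr rfl h2] at hmem
  exact hmem

set_option maxHeartbeats 8000000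

/-- **Lemma 3.5 (weak bases to strong bases).** -/
theorem statement5 (m n : ℕ) (hm : 1 ≤ m) (hn : 1 ≤ n) (R : ℝ) (hR : 1 ≤ R) :
    ∃ c₂ C₂ : ℝ, 0 < c₂ ∧ 1 ≤ C₂ ∧
      ∀ p : ℝ, (n : ℝ) < p →
      ∀ (ε₂ : ℝ) (x : Fin n → ℝ) (σ : Set ((Fin n → ℝ) → ℝ))
        (A : Finset (Fin n → ℕ)) (P : (Fin n → ℕ) → (Fin n → ℝ) → ℝ),
        0 < ε₂ → ε₂ ≤ c₂ →
        Convex ℝ σ → (∀ Q ∈ σ, -Q ∈ σ) →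
        (∀ Q ∈ σ, IsPolyDeg m Q) →
        A ⊆ Midx n (m - 1) →
        (∀ α ∈ A, ∃ Q ∈ σ, P α = ε₂ • Q) →
        (∀ α ∈ A, ∀ β ∈ Midx n (m - 1), (β = α ∨ mlt α β) →
          |pdM β (P α) x - (if β = α then 1 else 0)| ≤ ε₂) →
        (∀ α ∈ A, ∀ β ∈ Midx n (m - 1), |pdM β (P α) x| ≤ R) →
        ∃ B : (Fin n → ℕ) → (Fin n → ℕ) → ℝ,
          -- B is (C₂, C₂ ε₂) near-triangular
          (∀ α ∈ A, ∀ β ∈ A, (α = β ∨ mlt α β) →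
            |B α β - (if α = β then 1 else 0)| ≤ C₂ * ε₂) ∧
          (∀ α ∈ A, ∀ β ∈ A, |B α β| ≤ C₂) ∧
          -- the P̂_α = ∑_β B_{αβ} P_β form an (𝒜, x, C₂ ε₂, 1)-basis for σ
          IsBasis m p A x (C₂ * ε₂) 1 σ (fun α y => ∑ β ∈ A, B α β * P β y) ∧
          (∀ α ∈ A, ∀ β ∈ Midx n (m - 1),
            |pdM β (fun y => ∑ γ ∈ A, B α γ * P γ y) x| ≤ C₂) := by
  classical
  set N₀ : ℕ := (Midx n (m - 1)).card with hN₀def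
  set K : ℝ := ((N₀ : ℝ) + 2) * (N₀.factorial : ℝ) * (R + 1) ^ (N₀ + 2) with hKdef
  have hfact1 : (1:ℝ) ≤ (N₀.factorial : ℝ) := by
    exact_mod_cast Nat.one_le_iff_ne_zero.mpr (Nat.factorial_ne_zero N₀)
  have hpow1 : (1:ℝ) ≤ (R + 1) ^ (N₀ + 2) := one_le_pow₀ (by linarith)
  have hN₀0 : (0:ℝ) ≤ (N₀:ℝ) := Nat.cast_nonneg _
  set fp : ℝ := (N₀.factorial : ℝ) * (R + 1) ^ (N₀ + 2) with hfpdef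
  have hfp1 : (1:ℝ) ≤ fp := one_le_mul_of_one_le_of_one_le hfact1 hpow1
  have hKsplit : K = (N₀:ℝ) * fp + 2 * fp := by rw [hKdef, hfpdef]; ring
  have hN₀fp : (0:ℝ) ≤ (N₀:ℝ) * fp := by positivity
  have hK1 : (1:ℝ) ≤ K := by rw [hKsplit]; linarith
  have hKpos : (0:ℝ) < K := by linarith
  have hC₂1 : (1:ℝ) ≤ 4 * K ^ 2 := by nlinarith [mul_le_mul hK1 hK1 (by norm_num : (0:ℝ) ≤ 1) (by linarith : (0:ℝ) ≤ K)]
  refine ⟨1 / (2 * K), 4 * K ^ 2, by positivity, hC₂1, ?_⟩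
  intro p hp ε₂ x σ A P hε₂pos hε₂le hconv hsym hpoly hAM hrep hNear hRbd
  have hε₂K : ε₂ * K ≤ 1/2 := by
    have h1 : ε₂ * K ≤ (1 / (2*K)) * K := mul_le_mul_of_nonneg_right hε₂le (by linarith)
    have h2 : (1 / (2*K)) * K = 1/2 := by field_simp
    linarith
  have hε₂1 : ε₂ ≤ 1 := by nlinarith
  -- the index type
  have hinjA : Function.Injective (fun a : {y // y ∈ A} => key m a.1) := by
    intro a b hab
    by_contra hne
    have hne' : a.1 ≠ b.1 := fun h => hne (Subtype.ext h)
    rcases mlt_trichotomy hne' with h | h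
    · have := key_lt_of_mlt hm (hAM a.2) (hAM b.2) h
      simp only at hab; omega
    · have := key_lt_of_mlt hm (hAM b.2) (hAM a.2) h
      simp only at hab; omega
  set fA : {y // y ∈ A} → ℕ := fun a => key m a.1 with hfAdef
  set e : Matrix {y // y ∈ A} {y // y ∈ A} ℝ := fun b g => pdM b.1 (P g.1) x with hedef
  obtain ⟨NN, hNNdef⟩ : ∃ NN, Fintype.card {y // y ∈ A} = NN := ⟨_, rfl⟩
  have hNNle : NN ≤ N₀ := by
    rw [← hNNdef, Fintype.card_coe]
    exact Finset.card_le_card hAM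
  -- the basic entry estimates
  have hbd : ∀ i j, |e i j| ≤ R := fun i j => hRbd j.1 j.2 i.1 (hAM i.2)
  have hdiag : ∀ i, |e i i - 1| ≤ ε₂ := by
    intro i
    have := hNear i.1 i.2 i.1 (hAM i.2) (Or.inl rfl)
    simpa using this
  have hlow : ∀ i j, fA j < fA i → |e i j| ≤ ε₂ := by
    intro i j hji
    have hmlt : mlt j.1 i.1 := (key_lt_iff_mlt hm (hAM j.2) (hAM i.2)).mpr hji
    have := hNear j.1 j.2 i.1 (hAM i.2) (Or.inr hmlt)
    rwa [if_neg (fun h => (mlt_ne hmlt) h.symm), sub_zero] at this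
  -- numeric auxiliary bounds
  have hfle : (NN.factorial : ℝ) ≤ (N₀.factorial : ℝ) := by
    exact_mod_cast Nat.factorial_le hNNle
  have hpw : ∀ k : ℕ, k ≤ N₀ + 2 → R ^ k ≤ (R + 1) ^ (N₀ + 2) := by
    intro k hk
    calc R ^ k ≤ (R+1) ^ k := pow_le_pow_left₀ (by linarith) (by linarith) k
      _ ≤ (R+1) ^ (N₀+2) := pow_le_pow_right₀ (by linarith) hk
  have hNNR : (NN:ℝ) ≤ (N₀:ℝ) := by exact_mod_cast hNNle
  have hRpos : (0:ℝ) < R := by linarith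
  have hfact0 : (0:ℝ) ≤ (NN.factorial : ℝ) := Nat.cast_nonneg _
  have hfp_bd : ∀ k : ℕ, k ≤ N₀ + 2 → (NN.factorial : ℝ) * R ^ k ≤ fp := by
    intro k hk
    rw [hfpdef]
    exact mul_le_mul hfle (hpw k hk) (pow_nonneg (le_of_lt hRpos) k) (by linarith)
  have hC2 : (NN.factorial : ℝ) * R ^ NN ≤ K := by
    have := hfp_bd NN (by omega)
    rw [hKsplit]; linarith
  have hC3 : (NN.factorial : ℝ) * R ^ (NN - 1) ≤ K := by
    have := hfp_bd (NN-1) (by omega)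
    rw [hKsplit]; linarith
  have hC1 : (NN:ℝ) + (NN.factorial : ℝ) * R ^ (NN - 1) ≤ K := by
    have h1 := hfp_bd (NN-1) (by omega)
    have h2 : (NN:ℝ) ≤ (N₀:ℝ) * fp := by nlinarith
    rw [hKsplit]; linarith
  have hC4 : (NN:ℝ) * (R + 1) ≤ K := by
    have h1 : (R+1) ≤ fp := by
      have h2 : (R+1)^1 ≤ (R+1)^(N₀+2) := pow_le_pow_right₀ (by linarith) (by omega)
      rw [pow_one] at h2
      rw [hfpdef]; nlinarith
    have h3 : (NN:ℝ) * (R+1) ≤ (N₀:ℝ) * fp :=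
      mul_le_mul hNNR h1 (by linarith) hN₀0
    rw [hKsplit]; linarith
  -- determinant bound
  have hdet : (1:ℝ)/2 ≤ e.det := by
    have hlb := det_lower_bound fA e ε₂ R (le_of_lt hε₂pos) hε₂1 hR hbd hdiag hlow hinjA
    have h2 : ε₂ * NN + ε₂ * (NN.factorial : ℝ) * R ^ (NN-1) ≤ ε₂ * K := by
      have := mul_le_mul_of_nonneg_left hC1 (le_of_lt hε₂pos)
      nlinarith
    rw [hNNdef] at hlb
    linarith
  have hdetpos : (0:ℝ) < e.det := by linarith
  have hunit : IsUnit e.det := isUnit_iff_ne_zero.mpr (ne_of_gt hdetpos)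
  have hdetinv : (e.det)⁻¹ ≤ 2 := by
    have := inv_anti₀ (by norm_num : (0:ℝ) < 1/2) hdet
    simpa using this
  have hdetinvpos : (0:ℝ) < (e.det)⁻¹ := inv_pos.mpr hdetpos
  have hinv_entry : ∀ i j, e⁻¹ i j = (e.det)⁻¹ * e.adjugate i j := by
    intro i j
    rw [Matrix.inv_def, Ring.inverse_eq_inv]
    simp [Matrix.smul_apply, smul_eq_mul]
  have hinvbd : ∀ i j, |e⁻¹ i j| ≤ 2 * K := by
    intro i j
    rw [hinv_entry, abs_mul, abs_of_pos hdetinvpos]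
    have h1 := adj_bound e ε₂ R (le_of_lt hε₂pos) hR hbd i j
    rw [hNNdef] at h1
    have h2 : |e.adjugate i j| ≤ K := le_trans h1 hC2
    nlinarith [abs_nonneg (e.adjugate i j)]
  have hinvsmall : ∀ i j, fA j < fA i → |e⁻¹ i j| ≤ 2 * K * ε₂ := by
    intro i j hji
    rw [hinv_entry, abs_mul, abs_of_pos hdetinvpos]
    have h1 := adj_small fA e ε₂ R (le_of_lt hε₂pos) hε₂1 hR hbd hdiag hlow hinjA i j hji
    rw [hNNdef] at h1
    have h2 : |e.adjugate i j| ≤ ε₂ * K := by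
      calc |e.adjugate i j| ≤ (NN.factorial : ℝ) * (ε₂ * R ^ (NN-1)) := h1
        _ = ε₂ * ((NN.factorial : ℝ) * R ^ (NN-1)) := by ring
        _ ≤ ε₂ * K := by nlinarith
    nlinarith [abs_nonneg (e.adjugate i j)]
  have hEsum : ∀ i k, (∑ r, e⁻¹ i r * e r k) = if i = k then 1 else 0 := by
    intro i k
    have := congrFun (congrFun (Matrix.nonsing_inv_mul e hunit) i) k
    rw [Matrix.mul_apply] at this
    rw [this, Matrix.one_apply]
  have hEsum2 : ∀ b a, (∑ g, e b g * e⁻¹ g a) = if b = a then 1 else 0 := by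
    intro b a
    have := congrFun (congrFun (Matrix.mul_nonsing_inv e hunit) b) a
    rw [Matrix.mul_apply] at this
    rw [this, Matrix.one_apply]
  have hinv_near : ∀ i k, fA k ≤ fA i →
      |e⁻¹ i k - (if i = k then 1 else 0)| ≤ 2 * K^2 * ε₂ := by
    intro i k hki
    have hre : e⁻¹ i k - (if i = k then 1 else 0)
        = ∑ r, e⁻¹ i r * ((if r = k then 1 else 0) - e r k) := by
      have h1 : (∑ r, e⁻¹ i r * (if r = k then 1 else 0)) = e⁻¹ i k := by
        simp [mul_ite, mul_one, mul_zero]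
      simp only [mul_sub]
      rw [Finset.sum_sub_distrib, h1, hEsum i k]
    rw [hre]
    have hterm : ∀ r : {y // y ∈ A},
        |e⁻¹ i r * ((if r = k then 1 else 0) - e r k)| ≤ 2 * K * (R+1) * ε₂ := by
      intro r
      rw [abs_mul]
      rcases lt_or_ge (fA r) (fA i) with hlt | hge
      · have h1 : |e⁻¹ i r| ≤ 2 * K * ε₂ := hinvsmall i r hlt
        have h2 : |(if r = k then 1 else 0) - e r k| ≤ 1 + R := by
          have := hbd r k
          have h3 : |(if r = k then (1:ℝ) else 0)| ≤ 1 := by split <;> norm_num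
          calc |(if r = k then (1:ℝ) else 0) - e r k|
              ≤ |(if r = k then (1:ℝ) else 0)| + |e r k| := abs_sub _ _
            _ ≤ 1 + R := add_le_add h3 this
        calc |e⁻¹ i r| * |(if r = k then (1:ℝ) else 0) - e r k|
            ≤ (2 * K * ε₂) * (1 + R) := by
              apply mul_le_mul h1 h2 (abs_nonneg _) (by positivity)
          _ = 2 * K * (R+1) * ε₂ := by ring
      · have h1 : |e⁻¹ i r| ≤ 2 * K := hinvbd i r
        have h2 : |(if r = k then (1:ℝ) else 0) - e r k| ≤ ε₂ := by
          rcases eq_or_ne r k with rfl | hne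
          · rw [if_pos rfl]
            have := hdiag r
            rwa [abs_sub_comm]
          · rw [if_neg hne, zero_sub, abs_neg]
            apply hlow
            have : fA k ≠ fA r := fun h => hne (hinjA h).symm
            omega
        calc |e⁻¹ i r| * |(if r = k then (1:ℝ) else 0) - e r k|
            ≤ (2 * K) * ε₂ := mul_le_mul h1 h2 (abs_nonneg _) (by positivity)
          _ ≤ 2 * K * (R+1) * ε₂ := by
              have h7 : (0:ℝ) ≤ 2*K*ε₂*R := by positivity
              linarith
    calc |∑ r, e⁻¹ i r * ((if r = k then 1 else 0) - e r k)|
        ≤ ∑ r, |e⁻¹ i r * ((if r = k then 1 else 0) - e r k)| :=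
          Finset.abs_sum_le_sum_abs _ _
      _ ≤ (Finset.univ : Finset {y // y ∈ A}).card • (2 * K * (R+1) * ε₂) :=
          Finset.sum_le_card_nsmul _ _ _ (fun r _ => hterm r)
      _ = (NN:ℝ) * (2 * K * (R+1) * ε₂) := by
          rw [Finset.card_univ, hNNdef, nsmul_eq_mul]
      _ ≤ 2 * K^2 * ε₂ := by
          have h5 : (NN:ℝ)*(R+1)*ε₂ ≤ K*ε₂ := mul_le_mul_of_nonneg_right hC4 (le_of_lt hε₂pos)
          have h6 := mul_le_mul_of_nonneg_left h5 (by linarith : (0:ℝ) ≤ 2*K)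
          linarith [h6]
  -- smoothness of the P γ
  have hPsm : ∀ γ ∈ A, Sm (P γ) := by
    intro γ hγ
    obtain ⟨Q, hQσ, hPQ⟩ := hrep γ hγ
    rw [hPQ]
    have hQsm : Sm Q := isPolyDeg_smooth (hpoly Q hQσ)
    have hfun : (ε₂ • Q) = fun y => ε₂ * Q y := by
      funext y; simp [Pi.smul_apply, smul_eq_mul]
    rw [hfun]
    exact contDiff_const.mul hQsm
  have hcalc : ∀ (c : (Fin n → ℕ) → ℝ) (β : Fin n → ℕ),
      pdM β (fun y => ∑ γ ∈ A, c γ * P γ y) x = ∑ γ ∈ A, c γ * pdM β (P γ) x :=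
    fun c β => congrFun (pdM_finsum β A c P hPsm) x
  -- the matrix B
  set B : (Fin n → ℕ) → (Fin n → ℕ) → ℝ :=
    fun α γ => if h : α ∈ A ∧ γ ∈ A then e⁻¹ ⟨γ, h.2⟩ ⟨α, h.1⟩ else 0 with hBdef
  have hBval : ∀ (α γ : Fin n → ℕ) (hα : α ∈ A) (hγ : γ ∈ A),
      B α γ = e⁻¹ ⟨γ, hγ⟩ ⟨α, hα⟩ := by
    intro α γ hα hγ
    rw [hBdef]
    exact dif_pos ⟨hα, hγ⟩
  have hNA : A.card = NN := by rw [← hNNdef, Fintype.card_coe]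
  have hN₀K : (N₀:ℝ) ≤ K := by
    have h1 : (N₀:ℝ) ≤ (N₀:ℝ) * fp := le_mul_of_one_le_right hN₀0 hfp1
    rw [hKsplit]; linarith
  -- derivative of the combined polynomials
  have hPhat : ∀ (α : Fin n → ℕ) (hα : α ∈ A) (β : Fin n → ℕ),
      pdM β (fun y => ∑ γ ∈ A, B α γ * P γ y) x
        = ∑ γ : {y // y ∈ A}, e⁻¹ γ ⟨α, hα⟩ * pdM β (P γ.1) x := by
    intro α hα β
    rw [hcalc]
    rw [← Finset.sum_coe_sort A (fun γ => B α γ * pdM β (P γ) x)]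
    apply Finset.sum_congr rfl
    intro γ _
    rw [hBval α γ.1 hα γ.2]
  have hB2 : ∀ (α : Fin n → ℕ) (hα : α ∈ A) (β : Fin n → ℕ) (hβ : β ∈ A),
      pdM β (fun y => ∑ γ ∈ A, B α γ * P γ y) x = if β = α then 1 else 0 := by
    intro α hα β hβ
    rw [hPhat α hα β]
    calc ∑ γ : {y // y ∈ A}, e⁻¹ γ ⟨α, hα⟩ * pdM β (P γ.1) x
        = ∑ γ : {y // y ∈ A}, e ⟨β, hβ⟩ γ * e⁻¹ γ ⟨α, hα⟩ := by
          apply Finset.sum_congr rfl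
          intro γ _
          rw [show pdM β (P γ.1) x = e ⟨β, hβ⟩ γ from rfl]
          ring
      _ = if (⟨β, hβ⟩ : {y // y ∈ A}) = ⟨α, hα⟩ then 1 else 0 := hEsum2 _ _
      _ = if β = α then 1 else 0 := by
          by_cases h : β = α
          · rw [if_pos (Subtype.ext h), if_pos h]
          · rw [if_neg (fun hh => h (congrArg Subtype.val hh)), if_neg h]
  have hKe0 : (0:ℝ) ≤ K^2 * ε₂ := mul_nonneg (sq_nonneg K) hε₂pos.le
  have hB3 : ∀ (α : Fin n → ℕ) (hα : α ∈ A) (β : Fin n → ℕ), β ∈ Midx n (m-1) → mlt α β →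
      |pdM β (fun y => ∑ γ ∈ A, B α γ * P γ y) x| ≤ 2*K^2*ε₂ := by
    intro α hα β hβM hmlt
    rw [hPhat α hα β]
    have hαβ : key m α < key m β := key_lt_of_mlt hm (hAM hα) hβM hmlt
    have hterm : ∀ γ : {y // y ∈ A},
        |e⁻¹ γ ⟨α, hα⟩ * pdM β (P γ.1) x| ≤ 2*K*(R+1)*ε₂ := by
      intro γ
      rw [abs_mul]
      have hbdγ : |pdM β (P γ.1) x| ≤ R := hRbd γ.1 γ.2 β hβM
      have hcase : (fA ⟨α, hα⟩ < fA γ ∧ |pdM β (P γ.1) x| ≤ R) ∨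
          (|e⁻¹ γ ⟨α, hα⟩| ≤ 2*K ∧ |pdM β (P γ.1) x| ≤ ε₂) := by
        rcases eq_or_ne γ.1 β with heq | hne
        · left
          refine ⟨?_, hbdγ⟩
          show key m α < key m γ.1
          rw [heq]; exact hαβ
        · rcases mlt_trichotomy hne with hγβ | hβγ
          · right
            refine ⟨hinvbd _ _, ?_⟩
            have := hNear γ.1 γ.2 β hβM (Or.inr hγβ)
            rwa [if_neg (fun h => mlt_ne hγβ h.symm), sub_zero] at this
          · left
            refine ⟨?_, hbdγ⟩
            show key m α < key m γ.1
            exact lt_trans hαβ (key_lt_of_mlt hm hβM (hAM γ.2) hβγ)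
      rcases hcase with ⟨hlt, hbd'⟩ | ⟨hbd1, hbd2⟩
      · have h1 : |e⁻¹ γ ⟨α, hα⟩| ≤ 2*K*ε₂ := hinvsmall _ _ hlt
        calc |e⁻¹ γ ⟨α, hα⟩| * |pdM β (P γ.1) x| ≤ (2*K*ε₂) * R :=
              mul_le_mul h1 hbd' (abs_nonneg _) (by positivity)
          _ ≤ 2*K*(R+1)*ε₂ := by
              have h9 : (0:ℝ) ≤ 2*K*ε₂ := by positivity
              linarith
      · calc |e⁻¹ γ ⟨α, hα⟩| * |pdM β (P γ.1) x| ≤ (2*K) * ε₂ :=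
              mul_le_mul hbd1 hbd2 (abs_nonneg _) (by positivity)
          _ ≤ 2*K*(R+1)*ε₂ := by
              have h9 : (0:ℝ) ≤ 2*K*ε₂*R := by positivity
              linarith
    calc |∑ γ : {y // y ∈ A}, e⁻¹ γ ⟨α, hα⟩ * pdM β (P γ.1) x|
        ≤ ∑ γ : {y // y ∈ A}, |e⁻¹ γ ⟨α, hα⟩ * pdM β (P γ.1) x| :=
          Finset.abs_sum_le_sum_abs _ _
      _ ≤ (Finset.univ : Finset {y // y ∈ A}).card • (2*K*(R+1)*ε₂) :=
          Finset.sum_le_card_nsmul _ _ _ (fun γ _ => hterm γ)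
      _ = (NN:ℝ) * (2*K*(R+1)*ε₂) := by
          rw [Finset.card_univ, hNNdef, nsmul_eq_mul]
      _ ≤ 2*K^2*ε₂ := by
          have h5 : (NN:ℝ)*(R+1)*ε₂ ≤ K*ε₂ := mul_le_mul_of_nonneg_right hC4 (le_of_lt hε₂pos)
          have h6 := mul_le_mul_of_nonneg_left h5 (by linarith : (0:ℝ) ≤ 2*K)
          linarith [h6]
  have hB4 : ∀ (α : Fin n → ℕ) (hα : α ∈ A) (β : Fin n → ℕ), β ∈ Midx n (m-1) →
      |pdM β (fun y => ∑ γ ∈ A, B α γ * P γ y) x| ≤ 2*K^2 := by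
    intro α hα β hβM
    rw [hPhat α hα β]
    have hterm : ∀ γ : {y // y ∈ A},
        |e⁻¹ γ ⟨α, hα⟩ * pdM β (P γ.1) x| ≤ 2*K*R := by
      intro γ
      rw [abs_mul]
      exact mul_le_mul (hinvbd _ _) (hRbd γ.1 γ.2 β hβM) (abs_nonneg _) (by positivity)
    calc |∑ γ : {y // y ∈ A}, e⁻¹ γ ⟨α, hα⟩ * pdM β (P γ.1) x|
        ≤ ∑ γ : {y // y ∈ A}, |e⁻¹ γ ⟨α, hα⟩ * pdM β (P γ.1) x| :=
          Finset.abs_sum_le_sum_abs _ _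
      _ ≤ (Finset.univ : Finset {y // y ∈ A}).card • (2*K*R) :=
          Finset.sum_le_card_nsmul _ _ _ (fun γ _ => hterm γ)
      _ = (NN:ℝ) * (2*K*R) := by rw [Finset.card_univ, hNNdef, nsmul_eq_mul]
      _ ≤ 2*K^2 := by
          have h0' : (0:ℝ) ≤ (NN:ℝ) := Nat.cast_nonneg _
          have h5 : (NN:ℝ)*R ≤ K := by linarith [hC4]
          have h6 := mul_le_mul_of_nonneg_left h5 (by linarith : (0:ℝ) ≤ 2*K)
          linarith [h6]
  -- choose representatives
  choose Qf hQσ hPQ using hrep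
  refine ⟨B, ?_, ?_, ⟨?_, ?_, ?_⟩, ?_⟩
  · -- near triangular
    intro α hα β hβ hor
    rw [hBval α β hα hβ]
    have hle : fA ⟨α, hα⟩ ≤ fA ⟨β, hβ⟩ := by
      rcases hor with rfl | hmlt
      · exact le_refl _
      · exact le_of_lt (key_lt_of_mlt hm (hAM hα) (hAM hβ) hmlt)
    have h1 := hinv_near ⟨β, hβ⟩ ⟨α, hα⟩ hle
    have h2 : ((if (⟨β, hβ⟩ : {y // y ∈ A}) = ⟨α, hα⟩ then (1:ℝ) else 0))
        = (if α = β then 1 else 0) := by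
      by_cases h : α = β
      · rw [if_pos (Subtype.ext h.symm), if_pos h]
      · rw [if_neg (fun hh => h ((congrArg Subtype.val hh).symm)), if_neg h]
    rw [h2] at h1
    calc |e⁻¹ ⟨β, hβ⟩ ⟨α, hα⟩ - (if α = β then 1 else 0)| ≤ 2*K^2*ε₂ := h1
      _ ≤ 4*K^2*ε₂ := by linarith
  · -- global bound
    intro α hα β hβ
    rw [hBval α β hα hβ]
    calc |e⁻¹ ⟨β, hβ⟩ ⟨α, hα⟩| ≤ 2*K := hinvbd _ _
      _ ≤ 4*K^2 := by
          have h8 : 2*K*1 ≤ 2*K*(2*K) := mul_le_mul_of_nonneg_left (by linarith) (by linarith)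
          linarith [h8]
  · -- (B1) membership
    intro α hα
    have h0σ : (0 : (Fin n → ℝ) → ℝ) ∈ σ := by
      have hQ := hQσ α hα
      have h := hconv hQ (hsym _ hQ) (by norm_num : (0:ℝ) ≤ 1/2)
        (by norm_num : (0:ℝ) ≤ 1/2) (by norm_num)
      have heq : (1/2:ℝ) • Qf α hα + (1/2:ℝ) • (-(Qf α hα)) = 0 := by
        rw [smul_neg]; abel
      rwa [heq] at h
    refine ⟨∑ γ ∈ A.attach, (B α γ.1 / (4*K^2)) • Qf γ.1 γ.2, ?_, ?_⟩
    · apply convex_comb_mem hconv hsym h0σ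
      · intro γ _
        exact hQσ γ.1 γ.2
      · have hterm : ∀ γ ∈ A.attach, |B α γ.1 / (4*K^2)| ≤ 2*K/(4*K^2) := by
          intro γ _
          rw [abs_div, abs_of_pos (by positivity : (0:ℝ) < 4*K^2)]
          apply div_le_div_of_nonneg_right ?_ (by positivity)
          rw [hBval α γ.1 hα γ.2]
          exact hinvbd _ _
        calc ∑ γ ∈ A.attach, |B α γ.1 / (4*K^2)|
            ≤ A.attach.card • (2*K/(4*K^2)) := Finset.sum_le_card_nsmul _ _ _ hterm
          _ = (NN:ℝ) * (2*K/(4*K^2)) := by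
              rw [Finset.card_attach, hNA, nsmul_eq_mul]
          _ ≤ 1 := by
              have h7 : (NN:ℝ) ≤ K := le_trans hNNR hN₀K
              have h8 := mul_le_mul_of_nonneg_right h7 (by linarith : (0:ℝ) ≤ 2*K)
              rw [mul_div_assoc']
              rw [div_le_one (by positivity : (0:ℝ) < 4*K^2)]
              nlinarith [h8, sq_nonneg K]
    · rw [Real.one_rpow, mul_one]
      funext y
      show ∑ γ ∈ A, B α γ * P γ y = _
      rw [← Finset.sum_attach A (fun γ => B α γ * P γ y)]
      have hRHS : ((4*K^2*ε₂) • ∑ γ ∈ A.attach, (B α γ.1 / (4*K^2)) • Qf γ.1 γ.2) y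
          = ∑ γ ∈ A.attach, (4*K^2*ε₂) * (B α γ.1 / (4*K^2) * Qf γ.1 γ.2 y) := by
        simp [Finset.sum_apply, Pi.smul_apply, smul_eq_mul, Finset.mul_sum]
      rw [hRHS]
      apply Finset.sum_congr rfl
      intro γ _
      have hPγ : P γ.1 y = ε₂ * Qf γ.1 γ.2 y := by
        rw [hPQ γ.1 γ.2]; simp [Pi.smul_apply, smul_eq_mul]
      rw [hPγ]
      field_simp
  · -- (B2)
    intro α hα β hβ
    exact hB2 α hα β hβ
  · -- (B3)
    intro α hα β hβM hmlt
    rw [Real.one_rpow, mul_one]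
    calc |pdM β (fun y => ∑ γ ∈ A, B α γ * P γ y) x| ≤ 2*K^2*ε₂ := hB3 α hα β hβM hmlt
      _ ≤ 4*K^2*ε₂ := by linarith
  · -- final bound
    intro α hα β hβM
    calc |pdM β (fun y => ∑ γ ∈ A, B α γ * P γ y) x| ≤ 2*K^2 := hB4 α hα β hβM
      _ ≤ 4*K^2 := by linarith [sq_nonneg K]
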